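/- Comparison principle: let u, v: T_m → ℝ be bounded functions such that for every vertex x, u(x) ≥ min{ min over distinct successors y,z of (u(y)+u(z))/2 ; min over successors y of (u(x̂)+m·u(y))/(m+1) } and v(x) ≤ min{ min over distinct successors y,z of (v(y)+v(z))/2 ; min over successors y of (v(x̂)+m·v(y))/(m+1) } (predecessor terms omitted at the root). If along every branch π, limsup of v ≤ liminf of u, then u(x) ≥ v(x) for every vertex x ∈ T_m. -/
import Mathlib


open Filter Finset

/-- Vertices of the regular `m`-branching tree: finite sequences in `Fin m`
(root-first; the root is `[]`, successors of `x` are `x ++ [i]`). -/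
abbrev V (m : ℕ) := List (Fin m)

variable {m : ℕ}

/-- Distance from the root to `x`: sum of edge lengths `1/m^k`. -/
noncomputable def hgt (x : V m) : ℝ :=
  ∑ k ∈ Finset.range x.length, (1 : ℝ) / (m : ℝ) ^ (k + 1)

/-- Longest common prefix (the common ancestor of two vertices). -/
def lcp : V m → V m → V m
  | a :: x, b :: y => if a = b then a :: lcp x y else []
  | _, _ => []

/-- Path distance on the tree. -/
noncomputable def treeDist (x y : V m) : ℝ := hgt x + hgt y - 2 * hgt (lcp x y)

/-- `z` lies on the minimal path `[x,y]`. -/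
def OnPath (z x y : V m) : Prop := lcp x y <+: z ∧ (z <+: x ∨ z <+: y)

/-- Path-distance convexity on the tree. -/
def ConvexT (u : V m → ℝ) : Prop :=
  ∀ x y z : V m, x ≠ y → OnPath z x y →
    u z ≤ treeDist y z / treeDist x y * u x + treeDist x z / treeDist x y * u y

/-- The local characterization of convexity. -/
def LocConvex (u : V m → ℝ) : Prop :=
  ∀ x : V m,
    (∀ i j : Fin m, i ≠ j → u x ≤ (u (x ++ [i]) + u (x ++ [j])) / 2) ∧
    (x ≠ [] → ∀ i : Fin m,
      u x ≤ (u x.dropLast + (m : ℝ) * u (x ++ [i])) / ((m : ℝ) + 1))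

/-- Minimum over pairs of distinct successors of the averages. -/
noncomputable def binMin (u : V m → ℝ) (x : V m) : ℝ :=
  sInf {r | ∃ i j : Fin m, i ≠ j ∧ r = (u (x ++ [i]) + u (x ++ [j])) / 2}

/-- The operator governing the convex envelope (predecessor term omitted at the root). -/
noncomputable def opMin (u : V m → ℝ) (x : V m) : ℝ :=
  if x = [] then binMin u x
  else min (binMin u x)
    (sInf {r | ∃ i : Fin m,
      r = (u x.dropLast + (m : ℝ) * u (x ++ [i])) / ((m : ℝ) + 1)})

/-- The `k`-th vertex along a branch `π`. -/
def bvert (π : ℕ → Fin m) (k : ℕ) : V m := List.ofFn (fun i : Fin k => π i)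

/-- The boundary point in `[0,1]` associated to a branch. -/
noncomputable def psiB (m : ℕ) (π : ℕ → Fin m) : ℝ :=
  ∑' k : ℕ, (π k : ℝ) / (m : ℝ) ^ (k + 1)

/-- The point of `[0,1]` associated to a vertex. -/
noncomputable def psiV (x : V m) : ℝ :=
  ∑ k : Fin x.length, (x.get k : ℝ) / (m : ℝ) ^ ((k : ℕ) + 1)

/-- The successors of `y` that belong to `B`. -/
def succIn (B : Finset (V m)) (y : V m) : Finset (V m) :=
  B.filter (fun z => ∃ i : Fin m, z = y ++ [i])

/-- A finite binary subtree rooted at `x`. -/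
def IsBinSub (x : V m) (B : Finset (V m)) : Prop :=
  x ∈ B ∧ (succIn B x).card = 2 ∧
    ∀ y ∈ B, y ≠ x →
      x.length < y.length ∧ ((succIn B y).card = 0 ∨ (succIn B y).card = 2)

/-- The endpoints of `B`. -/
def Endpts (B : Finset (V m)) : Finset (V m) :=
  B.filter (fun y => (succIn B y).card = 0)

/-- Binary convexity. -/
def BinConvex (u : V m → ℝ) : Prop :=
  ∀ (x : V m) (B : Finset (V m)), IsBinSub x B →
    u x ≤ ∑ y ∈ Endpts B, (1 : ℝ) / 2 ^ (y.length - x.length) * u y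

/-- The local characterization of binary convexity. -/
def LocBinConvex (u : V m → ℝ) : Prop :=
  ∀ (x : V m) (i j : Fin m), i ≠ j → u x ≤ (u (x ++ [i]) + u (x ++ [j])) / 2

/-- Convex envelope of a boundary datum `g` (path-convexity version). -/
noncomputable def uStar (m : ℕ) (g : ℝ → ℝ) (x : V m) : ℝ :=
  sSup {r | ∃ u : V m → ℝ, ConvexT u ∧
    (∀ π : ℕ → Fin m,
      Filter.limsup (fun k => u (bvert π k)) Filter.atTop ≤ g (psiB m π)) ∧
    r = u x}

/-- Convex envelope of a boundary datum `g` (local characterization version). -/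
noncomputable def uStarL (m : ℕ) (g : ℝ → ℝ) (x : V m) : ℝ :=
  sSup {r | ∃ u : V m → ℝ, LocConvex u ∧
    (∀ π : ℕ → Fin m,
      Filter.limsup (fun k => u (bvert π k)) Filter.atTop ≤ g (psiB m π)) ∧
    r = u x}

/-- Convex envelope of an obstacle `f` defined on the tree. -/
noncomputable def envF (f : V m → ℝ) (x : V m) : ℝ :=
  sSup {r | ∃ u : V m → ℝ, LocConvex u ∧ (∀ z, u z ≤ f z) ∧ r = u x}

/-- Binary convex envelope of a boundary datum `g`. -/
noncomputable def bEnv (m : ℕ) (g : ℝ → ℝ) (x : V m) : ℝ :=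
  sSup {r | ∃ u : V m → ℝ, LocBinConvex u ∧
    (∀ π : ℕ → Fin m,
      Filter.limsup (fun k => u (bvert π k)) Filter.atTop ≤ g (psiB m π)) ∧
    r = u x}

section Stmt5Proof

variable {m : ℕ}

private lemma binSet_finite (u : V m → ℝ) (x : V m) :
    {r | ∃ i j : Fin m, i ≠ j ∧ r = (u (x ++ [i]) + u (x ++ [j])) / 2}.Finite := by
  apply Set.Finite.subset (Set.finite_range
    (fun p : Fin m × Fin m => (u (x ++ [p.1]) + u (x ++ [p.2])) / 2))
  rintro r ⟨i, j, -, rfl⟩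
  exact ⟨(i, j), rfl⟩

private lemma predSet_finite (u : V m → ℝ) (x : V m) :
    {r | ∃ i : Fin m, r = (u x.dropLast + (m : ℝ) * u (x ++ [i])) / ((m : ℝ) + 1)}.Finite := by
  apply Set.Finite.subset (Set.finite_range
    (fun i : Fin m => (u x.dropLast + (m : ℝ) * u (x ++ [i])) / ((m : ℝ) + 1)))
  rintro r ⟨i, rfl⟩
  exact ⟨i, rfl⟩

private lemma binSet_nonempty (hm : 2 ≤ m) (u : V m → ℝ) (x : V m) :
    {r | ∃ i j : Fin m, i ≠ j ∧ r = (u (x ++ [i]) + u (x ++ [j])) / 2}.Nonempty := by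
  refine ⟨_, ⟨⟨0, by omega⟩, ⟨1, by omega⟩, ?_, rfl⟩⟩
  simp [Fin.ext_iff]

private lemma predSet_nonempty (hm : 2 ≤ m) (u : V m → ℝ) (x : V m) :
    {r | ∃ i : Fin m, r = (u x.dropLast + (m : ℝ) * u (x ++ [i])) / ((m : ℝ) + 1)}.Nonempty :=
  ⟨_, ⟨⟨0, by omega⟩, rfl⟩⟩

/-- The key local step: from any vertex there is a successor along which
`w = v - u` does not decrease too much. -/
private lemma stepLemma (hm : 2 ≤ m) (u v : V m → ℝ)
    (hu : ∀ x : V m, opMin u x ≤ u x)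
    (hv : ∀ x : V m, v x ≤ opMin v x) (x : V m) :
    ∃ i : Fin m,
      (v x - u x) + min 0 (((v x - u x) - (v x.dropLast - u x.dropLast)) / (m : ℝ))
        ≤ v (x ++ [i]) - u (x ++ [i]) := by
  have hM : (2 : ℝ) ≤ (m : ℝ) := by exact_mod_cast hm
  have hM0 : (0 : ℝ) < (m : ℝ) := by linarith
  have binCase : binMin u x ≤ u x → ∃ i : Fin m,
      (v x - u x) + min 0 (((v x - u x) - (v x.dropLast - u x.dropLast)) / (m : ℝ))
        ≤ v (x ++ [i]) - u (x ++ [i]) := by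
    intro hb
    obtain ⟨i, j, hij, hEq⟩ :=
      (binSet_nonempty hm u x).csInf_mem (binSet_finite u x)
    have hui : (u (x ++ [i]) + u (x ++ [j])) / 2 ≤ u x := by
      rw [← hEq]; exact hb
    have hvi : v x ≤ (v (x ++ [i]) + v (x ++ [j])) / 2 := by
      refine le_trans (hv x) (le_trans ?_ (csInf_le (binSet_finite v x).bddBelow
        ⟨i, j, hij, rfl⟩))
      unfold opMin
      split
      · exact le_refl _
      · exact min_le_left _ _
    have hmin := min_le_left (0:ℝ)
      (((v x - u x) - (v x.dropLast - u x.dropLast)) / (m : ℝ))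
    by_cases hc : v x - u x ≤ v (x ++ [i]) - u (x ++ [i])
    · exact ⟨i, by linarith⟩
    · push_neg at hc
      exact ⟨j, by linarith⟩
  by_cases hx : x = []
  · have hb : binMin u x ≤ u x := by
      have := hu x
      rwa [opMin, if_pos hx] at this
    exact binCase hb
  · have h := hu x
    rw [opMin, if_neg hx] at h
    rcases min_le_iff.mp h with hb | hp
    · exact binCase hb
    · obtain ⟨i, hEq⟩ := (predSet_nonempty hm u x).csInf_mem (predSet_finite u x)
      have hui : (u x.dropLast + (m : ℝ) * u (x ++ [i])) / ((m : ℝ) + 1) ≤ u x := by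
        rw [← hEq]; exact hp
      have hvi : v x ≤ (v x.dropLast + (m : ℝ) * v (x ++ [i])) / ((m : ℝ) + 1) := by
        refine le_trans (hv x) (le_trans ?_ (csInf_le (predSet_finite v x).bddBelow ⟨i, rfl⟩))
        rw [opMin, if_neg hx]
        exact min_le_right _ _
      refine ⟨i, ?_⟩
      have hM1 : (0 : ℝ) < (m : ℝ) + 1 := by linarith
      have h1 : u x.dropLast + (m : ℝ) * u (x ++ [i]) ≤ ((m : ℝ) + 1) * u x := by
        rw [div_le_iff₀ hM1] at hui; linarith
      have h2 : ((m : ℝ) + 1) * v x ≤ v x.dropLast + (m : ℝ) * v (x ++ [i]) := by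
        rw [le_div_iff₀ hM1] at hvi; linarith
      have hkey : ((v x - u x) - (v x.dropLast - u x.dropLast)) / (m : ℝ)
          ≤ (v (x ++ [i]) - u (x ++ [i])) - (v x - u x) := by
        rw [div_le_iff₀ hM0]
        nlinarith
      have hmin := min_le_right (0:ℝ)
        (((v x - u x) - (v x.dropLast - u x.dropLast)) / (m : ℝ))
      linarith

private def chain (f : V m → Fin m) (x₀ : V m) : ℕ → V m
  | 0 => x₀
  | k + 1 => chain f x₀ k ++ [f (chain f x₀ k)]

private lemma bvert_succ (π : ℕ → Fin m) (n : ℕ) :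
    bvert π (n + 1) = bvert π n ++ [π n] := by
  unfold bvert
  rw [List.ofFn_succ']
  simp [List.concat_eq_append]

end Stmt5Proof


/-- comparison principle for the convexity operator. -/
theorem stmt5 (m : ℕ) (hm : 2 ≤ m) (u v : V m → ℝ)
    (hub : ∃ C : ℝ, ∀ x : V m, |u x| ≤ C)
    (hvb : ∃ C : ℝ, ∀ x : V m, |v x| ≤ C)
    (hu : ∀ x : V m, opMin u x ≤ u x)
    (hv : ∀ x : V m, v x ≤ opMin v x)
    (hbd : ∀ π : ℕ → Fin m,
      Filter.limsup (fun k => v (bvert π k)) Filter.atTop ≤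
        Filter.liminf (fun k => u (bvert π k)) Filter.atTop) :
    ∀ x : V m, v x ≤ u x := by
  obtain ⟨Cu, hCu⟩ := hub
  obtain ⟨Cv, hCv⟩ := hvb
  set w : V m → ℝ := fun x => v x - u x with hwdef
  have hwub : ∀ x, w x ≤ Cv + Cu := by
    intro x
    have h1 := abs_le.1 (hCu x)
    have h2 := abs_le.1 (hCv x)
    simp only [hwdef]
    linarith [h1.1, h2.2]
  have hbdd : BddAbove (Set.range w) := ⟨Cv + Cu, by rintro r ⟨x, rfl⟩; exact hwub x⟩
  set S := sSup (Set.range w) with hSdef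
  have hle : ∀ x, w x ≤ S := fun x => le_csSup hbdd ⟨x, rfl⟩
  suffices hS : S ≤ 0 by
    intro x
    have := hle x
    simp only [hwdef] at this
    linarith
  by_contra hS
  push_neg at hS
  set ε := S / 4 with hεdef
  have hε : 0 < ε := by simp only [hεdef]; linarith
  obtain ⟨x₀, hx₀⟩ : ∃ x, S - ε < w x := by
    obtain ⟨r, hr, hr'⟩ := exists_lt_of_lt_csSup (Set.range_nonempty w) (by linarith : S - ε < S)
    obtain ⟨x, rfl⟩ := hr
    exact ⟨x, hr'⟩
  choose f hf using stepLemma hm u v hu hv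
  obtain ⟨X, hX0, hXsucc⟩ : ∃ X : ℕ → V m, X 0 = x₀ ∧ ∀ k, X (k + 1) = X k ++ [f (X k)] :=
    ⟨chain f x₀, by simp [chain], fun k => by simp [chain]⟩
  have hM : (2 : ℝ) ≤ (m : ℝ) := by exact_mod_cast hm
  have hM0 : (0 : ℝ) < (m : ℝ) := by linarith
  set q : ℝ := 1 / (m : ℝ) with hqdef
  have hq0 : 0 < q := by positivity
  have hq : 2 * q ≤ 1 := by
    rw [hqdef, mul_one_div, div_le_one hM0]
    exact hM
  clear_value w S ε
  have inv : ∀ k, -(ε * q ^ k) ≤ w (X k) - w ((X k).dropLast)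
      ∧ w x₀ - ε * (1 - q ^ k) ≤ w (X k) := by
    intro k
    induction k with
    | zero =>
      refine ⟨?_, by rw [hX0]; simp⟩
      have h1 := hle ((X 0).dropLast)
      rw [hX0] at h1 ⊢
      simp only [pow_zero, mul_one]
      linarith
    | succ k ih =>
      have hstep' : w (X k) + min 0 ((w (X k) - w ((X k).dropLast)) / (m : ℝ))
          ≤ w (X (k + 1)) := by
        have hstep := hf (X k)
        rw [hXsucc k]
        simpa only [hwdef] using hstep
      have hdrop : (X (k + 1)).dropLast = X k := by
        rw [hXsucc k]
        simp
      have hpow : q ^ (k + 1) = q ^ k * q := pow_succ q k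
      have hqm : -(ε * q ^ (k + 1)) = -(ε * q ^ k) / (m : ℝ) := by
        rw [hpow, hqdef]
        field_simp
      have hlow : -(ε * q ^ (k + 1)) ≤
          min 0 ((w (X k) - w ((X k).dropLast)) / (m : ℝ)) := by
        have hnn : (0:ℝ) ≤ ε * q ^ (k + 1) := mul_nonneg hε.le (pow_nonneg hq0.le _)
        refine le_min (by linarith) ?_
        rw [hqm]
        exact (div_le_div_iff_of_pos_right hM0).mpr ih.1
      have hpk : (0:ℝ) ≤ q ^ k := pow_nonneg hq0.le _
      have hgeom : 2 * q ^ (k + 1) ≤ q ^ k := by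
        rw [hpow]
        calc 2 * (q ^ k * q) = (2 * q) * q ^ k := by ring
          _ ≤ 1 * q ^ k := mul_le_mul_of_nonneg_right hq hpk
          _ = q ^ k := one_mul _
      refine ⟨?_, ?_⟩
      · rw [hdrop]
        linarith [hstep', hlow]
      · have h2 := ih.2
        linarith [mul_nonneg hε.le (by linarith : (0:ℝ) ≤ q ^ k - 2 * q ^ (k+1)),
          hstep', hlow]
  have hW : ∀ k, S / 2 ≤ w (X k) := by
    intro k
    have h1 := (inv k).2
    have hpk : (0:ℝ) ≤ q ^ k := pow_nonneg hq0.le _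
    have : ε * (1 - q ^ k) ≤ ε := by nlinarith [mul_nonneg hε.le hpk]
    simp only [hεdef] at *
    linarith
  set π : ℕ → Fin m := fun n =>
    if h : n < x₀.length then x₀.get ⟨n, h⟩ else f (X (n - x₀.length)) with hπdef
  have hbase : bvert π x₀.length = x₀ := by
    conv_rhs => rw [← List.ofFn_get x₀]
    show List.ofFn (fun i : Fin x₀.length => π ↑i) = List.ofFn x₀.get
    refine congrArg List.ofFn ?_
    funext i
    simp only [hπdef, i.isLt, dif_pos]
  have hbv : ∀ k, bvert π (x₀.length + k) = X k := by
    intro k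
    induction k with
    | zero => simpa [hX0] using hbase
    | succ k ih =>
      have he : x₀.length + (k + 1) = (x₀.length + k) + 1 := by omega
      rw [he, bvert_succ, ih, hXsucc]
      have hπk : π (x₀.length + k) = f (X k) := by
        simp only [hπdef]
        have harg : x₀.length + k - x₀.length = k := by omega
        rw [dif_neg (by omega), harg]
      rw [hπk]
  have hBul : Filter.IsBoundedUnder (· ≥ ·) Filter.atTop (fun k => u (bvert π k)) :=
    Filter.isBoundedUnder_of ⟨-Cu, fun k => (abs_le.1 (hCu _)).1⟩
  have hBv : Filter.IsBoundedUnder (· ≤ ·) Filter.atTop (fun k => v (bvert π k)) :=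
    Filter.isBoundedUnder_of ⟨Cv, fun k => (abs_le.1 (hCv _)).2⟩
  obtain ⟨L, hLdef⟩ : ∃ L, Filter.liminf (fun k => u (bvert π k)) Filter.atTop = L := ⟨_, rfl⟩
  have hbdπ := hbd π
  rw [hLdef] at hbdπ
  have h2 : ∀ᶠ k in Filter.atTop, v (bvert π k) < L + S / 4 :=
    Filter.eventually_lt_of_limsup_lt (lt_of_le_of_lt hbdπ (by linarith)) hBv
  have h3 : ∀ᶠ k in Filter.atTop, L - S / 8 < u (bvert π k) :=
    Filter.eventually_lt_of_lt_liminf (by rw [hLdef]; linarith) hBul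
  have h4 : ∀ᶠ k in Filter.atTop, S / 2 ≤ v (bvert π k) - u (bvert π k) := by
    rw [Filter.eventually_atTop]
    refine ⟨x₀.length, fun k hk => ?_⟩
    have hb : bvert π k = X (k - x₀.length) := by
      rw [← hbv (k - x₀.length)]
      congr 1
      omega
    rw [hb]
    have := hW (k - x₀.length)
    simpa only [hwdef] using this
  obtain ⟨k, hk2, hk3, hk4⟩ := (h2.and (h3.and h4)).exists
  linarith
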